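/- For the LeadingOnesTrailingZeros benchmark, the Pareto set is exactly {1^k 0^{n−k} : k ∈ [0, n]}, the Pareto front is {(k, n−k) : k ∈ [0, n]}, and the map from Pareto set to Pareto front is a bijection. -/

import Mathlib

/-- Length of the longest prefix of ones of a bit string. -/
def leadingOnes {n : ℕ} (x : Fin n → Bool) : ℕ :=
  (Finset.univ.filter fun i : Fin n => ∀ j : Fin n, j ≤ i → x j = true).card

/-- Length of the longest suffix of zeros of a bit string. -/
def trailingZeros {n : ℕ} (x : Fin n → Bool) : ℕ :=
  (Finset.univ.filter fun i : Fin n => ∀ j : Fin n, i ≤ j → x j = false).card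

/-- The objective vector of LOTZ. -/
def lotz {n : ℕ} (x : Fin n → Bool) : ℕ × ℕ := (leadingOnes x, trailingZeros x)

/-- `y` strictly dominates `x` for LOTZ (maximization, componentwise). -/
def lotzStrictDom {n : ℕ} (y x : Fin n → Bool) : Prop :=
  leadingOnes x ≤ leadingOnes y ∧ trailingZeros x ≤ trailingZeros y ∧ lotz y ≠ lotz x

/-- `x` is Pareto-optimal for LOTZ. -/
def lotzParetoOptimal {n : ℕ} (x : Fin n → Bool) : Prop :=
  ¬ ∃ y : Fin n → Bool, lotzStrictDom y x

lemma leadingOnes_le {n : ℕ} (x : Fin n → Bool) : leadingOnes x ≤ n := by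
  classical
  calc leadingOnes x ≤ (Finset.univ : Finset (Fin n)).card := Finset.card_filter_le _ _
  _ = n := by simp

lemma lead_iff {n : ℕ} (x : Fin n → Bool) (i : Fin n) :
    (∀ j, j ≤ i → x j = true) ↔ (i : ℕ) < leadingOnes x := by
  classical
  constructor
  · intro h
    have hsub : Finset.Iic i ⊆
        Finset.univ.filter fun i : Fin n => ∀ j : Fin n, j ≤ i → x j = true := by
      intro j hj
      simp only [Finset.mem_Iic] at hj
      simp only [Finset.mem_filter, Finset.mem_univ, true_and]
      exact fun k hk => h k (hk.trans hj)
    have h' : (i : ℕ) + 1 ≤ leadingOnes x := by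
      rw [leadingOnes]
      have := Finset.card_le_card hsub
      rwa [Fin.card_Iic] at this
    omega
  · intro h
    by_contra hc
    push_neg at hc
    have hi : i ∉ Finset.univ.filter fun i : Fin n => ∀ j : Fin n, j ≤ i → x j = true := by
      simp only [Finset.mem_filter, Finset.mem_univ, true_and]
      push_neg
      exact hc
    have hsub : (Finset.univ.filter fun i : Fin n => ∀ j : Fin n, j ≤ i → x j = true)
        ⊆ Finset.Iio i := by
      intro j hj
      simp only [Finset.mem_filter, Finset.mem_univ, true_and] at hj
      simp only [Finset.mem_Iio]
      by_contra hji
      push_neg at hji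
      apply hi
      simp only [Finset.mem_filter, Finset.mem_univ, true_and]
      exact fun k hk => hj k (hk.trans hji)
    have h' : leadingOnes x ≤ (i : ℕ) := by
      rw [leadingOnes]
      have := Finset.card_le_card hsub
      rwa [Fin.card_Iio] at this
    omega

lemma trail_iff {n : ℕ} (x : Fin n → Bool) (i : Fin n) :
    (∀ j, i ≤ j → x j = false) ↔ n ≤ (i : ℕ) + trailingZeros x := by
  classical
  constructor
  · intro h
    have hsub : Finset.Ici i ⊆
        Finset.univ.filter fun i : Fin n => ∀ j : Fin n, i ≤ j → x j = false := by
      intro j hj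
      simp only [Finset.mem_Ici] at hj
      simp only [Finset.mem_filter, Finset.mem_univ, true_and]
      exact fun k hk => h k (hj.trans hk)
    have h' : n - (i : ℕ) ≤ trailingZeros x := by
      rw [trailingZeros]
      have := Finset.card_le_card hsub
      rwa [Fin.card_Ici] at this
    have hin : (i : ℕ) < n := i.isLt
    omega
  · intro h
    by_contra hc
    push_neg at hc
    have hi : i ∉ Finset.univ.filter fun i : Fin n => ∀ j : Fin n, i ≤ j → x j = false := by
      simp only [Finset.mem_filter, Finset.mem_univ, true_and]
      push_neg
      exact hc
    have hsub : (Finset.univ.filter fun i : Fin n => ∀ j : Fin n, i ≤ j → x j = false)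
        ⊆ Finset.Ioi i := by
      intro j hj
      simp only [Finset.mem_filter, Finset.mem_univ, true_and] at hj
      simp only [Finset.mem_Ioi]
      by_contra hji
      push_neg at hji
      apply hi
      simp only [Finset.mem_filter, Finset.mem_univ, true_and]
      exact fun k hk => hj k (hji.trans hk)
    have h' : trailingZeros x ≤ n - 1 - (i : ℕ) := by
      rw [trailingZeros]
      have := Finset.card_le_card hsub
      rwa [Fin.card_Ioi] at this
    have hin : (i : ℕ) < n := i.isLt
    omega

lemma lotz_sum_le {n : ℕ} (x : Fin n → Bool) : leadingOnes x + trailingZeros x ≤ n := by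
  classical
  rw [leadingOnes, trailingZeros, ← Finset.card_union_of_disjoint]
  · calc _ ≤ (Finset.univ : Finset (Fin n)).card := Finset.card_le_card (Finset.subset_univ _)
    _ = n := by simp
  · rw [Finset.disjoint_left]
    intro i h1 h2
    simp only [Finset.mem_filter, Finset.mem_univ, true_and] at h1 h2
    have := h1 i le_rfl
    have := h2 i le_rfl
    simp_all

lemma lotz_onekzero {n k : ℕ} (hk : k ≤ n) :
    lotz (fun i : Fin n => decide ((i : ℕ) < k)) = (k, n - k) := by
  set x : Fin n → Bool := fun i : Fin n => decide ((i : ℕ) < k) with hx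
  have hlead : leadingOnes x = k := by
    have h1 : k ≤ leadingOnes x := by
      rcases Nat.eq_zero_or_pos k with h0 | hpos
      · omega
      · have hkn : k - 1 < n := by omega
        have := (lead_iff x ⟨k - 1, hkn⟩).1 (fun j hj => by
          simp only [hx, decide_eq_true_eq]
          have : (j : ℕ) ≤ k - 1 := hj
          omega)
        simp at this
        omega
    have h2 : leadingOnes x ≤ k := by
      by_contra hc
      push_neg at hc
      have hkn : k < n := lt_of_lt_of_le hc (leadingOnes_le x)
      have := (lead_iff x ⟨k, hkn⟩).2 (by simpa using hc) ⟨k, hkn⟩ le_rfl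
      simp [hx] at this
    omega
  have htrail : trailingZeros x = n - k := by
    have h1 : n - k ≤ trailingZeros x := by
      rcases eq_or_lt_of_le hk with h0 | hkn
      · omega
      · have := (trail_iff x ⟨k, hkn⟩).1 (fun j hj => by
          simp only [hx, decide_eq_false_iff_not, not_lt]
          exact hj)
        simp at this
        omega
    have h2 : trailingZeros x + leadingOnes x ≤ n := by
      have := lotz_sum_le x; omega
    omega
  simp [lotz, hlead, htrail]

lemma pareto_of_sum_eq {n : ℕ} (x : Fin n → Bool)
    (h : leadingOnes x + trailingZeros x = n) : lotzParetoOptimal x := by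
  rintro ⟨y, h1, h2, h3⟩
  have hy := lotz_sum_le y
  have e1 : leadingOnes y = leadingOnes x := by omega
  have e2 : trailingZeros y = trailingZeros x := by omega
  exact h3 (by simp [lotz, e1, e2])

lemma pareto_sum_eq {n : ℕ} (x : Fin n → Bool) (h : lotzParetoOptimal x) :
    leadingOnes x + trailingZeros x = n := by
  by_contra hc
  have hlt : leadingOnes x + trailingZeros x < n := lt_of_le_of_ne (lotz_sum_le x) hc
  set a := leadingOnes x with ha
  have han : a ≤ n := leadingOnes_le x
  have := lotz_onekzero han
  apply h
  refine ⟨fun i : Fin n => decide ((i : ℕ) < a), ?_, ?_, ?_⟩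
  · simp [show leadingOnes (fun i : Fin n => decide ((i : ℕ) < a)) = a from by
      have := lotz_onekzero (n := n) (k := a) han; simp [lotz, Prod.ext_iff] at this; exact this.1]
    exact ha.ge
  · have := lotz_onekzero (n := n) (k := a) han
    simp [lotz, Prod.ext_iff] at this
    rw [this.2]
    omega
  · rw [lotz_onekzero han]
    simp [lotz, Prod.ext_iff]
    intro _
    omega

lemma pareto_eq_onekzero {n : ℕ} (x : Fin n → Bool) (h : lotzParetoOptimal x) :
    x = fun i : Fin n => decide ((i : ℕ) < leadingOnes x) := by
  have hs := pareto_sum_eq x h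
  funext i
  by_cases hi : (i : ℕ) < leadingOnes x
  · have := (lead_iff x i).2 hi i le_rfl
    simp [this, hi]
  · push_neg at hi
    have : n ≤ (i : ℕ) + trailingZeros x := by omega
    have := (trail_iff x i).2 this i le_rfl
    simp [this, hi]

theorem stmt_11 (n : ℕ) :
    ({x : Fin n → Bool | lotzParetoOptimal x} =
      {x : Fin n → Bool | ∃ k ≤ n, x = fun i : Fin n => decide ((i : ℕ) < k)}) ∧
    ({p : ℕ × ℕ | ∃ x : Fin n → Bool, lotzParetoOptimal x ∧ p = lotz x} =
      {p : ℕ × ℕ | ∃ k ≤ n, p = (k, n - k)}) ∧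
    (∀ x y : Fin n → Bool, lotzParetoOptimal x → lotzParetoOptimal y →
      lotz x = lotz y → x = y) := by
  have hpareto : ∀ k ≤ n, lotzParetoOptimal (fun i : Fin n => decide ((i : ℕ) < k)) := by
    intro k hk
    apply pareto_of_sum_eq
    have := lotz_onekzero (n := n) hk
    simp [lotz, Prod.ext_iff] at this
    omega
  refine ⟨?_, ?_, ?_⟩
  · ext x
    simp only [Set.mem_setOf_eq]
    constructor
    · intro h
      exact ⟨leadingOnes x, leadingOnes_le x, pareto_eq_onekzero x h⟩
    · rintro ⟨k, hk, rfl⟩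
      exact hpareto k hk
  · ext p
    simp only [Set.mem_setOf_eq]
    constructor
    · rintro ⟨x, hx, rfl⟩
      refine ⟨leadingOnes x, leadingOnes_le x, ?_⟩
      have hs := pareto_sum_eq x hx
      simp only [lotz, Prod.ext_iff]
      exact ⟨trivial, by omega⟩
    · rintro ⟨k, hk, rfl⟩
      exact ⟨_, hpareto k hk, (lotz_onekzero hk).symm⟩
  · intro x y hx hy hxy
    have ex := pareto_eq_onekzero x hx
    have ey := pareto_eq_onekzero y hy
    have : leadingOnes x = leadingOnes y := by
      simpa [lotz] using congrArg Prod.fst hxy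
    rw [ex, ey, this]
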